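/- arXiv:2002.04093 — 2 statements merged into one kernel-verified Lean document; each statement's English description precedes it below -/
import Mathlib

section
/- Let ρ > 0, ν_m > 0, 0 < δ < H, and let ν : ℝ³ → ℝ be a measurable function with ν(v) ≥ ν_m(1 + |v|) for all v. Then the integral ∫_δ^H ∫_{ℝ³} v_z^{-2} exp(−2ρν(v)z/|v_z| − v_z²) dv dz is finite. -/
open Set MeasureTheory

private lemma exp_quad_lb {x : ℝ} (hx : 0 ≤ x) : x ^ 2 / 4 ≤ Real.exp x := by
  have h : x / 2 ≤ Real.exp (x / 2) := le_trans (by linarith) (Real.add_one_le_exp (x / 2))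
  have h2 : (x / 2) ^ 2 ≤ Real.exp (x / 2) ^ 2 := pow_le_pow_left₀ (by positivity) h 2
  calc x ^ 2 / 4 = (x / 2) ^ 2 := by ring
    _ ≤ Real.exp (x / 2) ^ 2 := h2
    _ = Real.exp x := by rw [sq, ← Real.exp_add]; congr 1; ring

private lemma exp_cube_lb {x : ℝ} (hx : 0 ≤ x) : x ^ 3 / 27 ≤ Real.exp x := by
  have h : x / 3 ≤ Real.exp (x / 3) := le_trans (by linarith) (Real.add_one_le_exp (x / 3))
  have h2 : (x / 3) ^ 3 ≤ Real.exp (x / 3) ^ 3 := pow_le_pow_left₀ (by positivity) h 3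
  calc x ^ 3 / 27 = (x / 3) ^ 3 := by ring
    _ ≤ Real.exp (x / 3) ^ 3 := h2
    _ = Real.exp x := by
        rw [pow_succ, pow_succ, pow_one, ← Real.exp_add, ← Real.exp_add]; congr 1; ring

private lemma aux_inv {c t : ℝ} (hc : 0 < c) (ht : 0 < t) :
    (t ^ 2)⁻¹ * Real.exp (-(c / (3 * t))) ≤ 36 / c ^ 2 := by
  have hx : (0:ℝ) < c / (3 * t) := by positivity
  have h := exp_quad_lb hx.le
  have h2 : Real.exp (-(c / (3 * t))) ≤ ((c / (3 * t)) ^ 2 / 4)⁻¹ := by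
    rw [Real.exp_neg]
    exact inv_anti₀ (by positivity) h
  calc (t ^ 2)⁻¹ * Real.exp (-(c / (3 * t)))
      ≤ (t ^ 2)⁻¹ * ((c / (3 * t)) ^ 2 / 4)⁻¹ := by
        exact mul_le_mul_of_nonneg_left h2 (by positivity)
    _ = 36 / c ^ 2 := by field_simp; ring

private lemma aux_decay {c t x : ℝ} (hc : 0 < c) (ht : 0 < t) (hx : 0 ≤ x) :
    Real.exp (-(c * x / (3 * t) + t ^ 2 / 3)) ≤ (1 + 243 / c ^ 2) * (1 + x ^ 2)⁻¹ := by
  have h1x : (0:ℝ) < 1 + x ^ 2 := by positivity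
  rw [← div_eq_mul_inv, le_div_iff₀ h1x]
  have hA0 : 0 < c * x / (3 * t) + t ^ 2 / 3 := by positivity
  set A := c * x / (3 * t) + t ^ 2 / 3 with hA
  have e1 : Real.exp (-A) ≤ 1 := Real.exp_le_one_iff.mpr (by linarith)
  have e2 : Real.exp (-A) * x ^ 2 ≤ 243 / c ^ 2 := by
    rcases eq_or_lt_of_le hx with h0 | hxpos
    · rw [← h0]
      norm_num
      positivity
    · have hcube := exp_cube_lb hA0.le
      have h3 : Real.exp (-A) ≤ (A ^ 3 / 27)⁻¹ := by
        rw [Real.exp_neg]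
        exact inv_anti₀ (by positivity) hcube
      have ha : 0 ≤ c * x / (3 * t) := by positivity
      have hb : 0 < t ^ 2 / 3 := by positivity
      have key : 3 * (c * x / (3 * t)) ^ 2 * (t ^ 2 / 3) ≤ A ^ 3 := by
        rw [hA]
        nlinarith [mul_nonneg (mul_nonneg ha ha) ha,
          mul_nonneg (mul_nonneg ha hb.le) hb.le,
          mul_nonneg (mul_nonneg hb.le hb.le) hb.le,
          mul_nonneg (mul_nonneg ha ha) hb.le]
      have keq : 3 * (c * x / (3 * t)) ^ 2 * (t ^ 2 / 3) = c ^ 2 * x ^ 2 / 9 := by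
        field_simp; ring
      have hA3 : c ^ 2 * x ^ 2 / 9 ≤ A ^ 3 := keq ▸ key
      calc Real.exp (-A) * x ^ 2 ≤ (A ^ 3 / 27)⁻¹ * x ^ 2 := by gcongr
        _ = 27 * x ^ 2 / A ^ 3 := by rw [inv_div]; ring
        _ ≤ 27 * x ^ 2 / (c ^ 2 * x ^ 2 / 9) := by gcongr
        _ = 243 / c ^ 2 := by field_simp; ring
  calc Real.exp (-A) * (1 + x ^ 2) = Real.exp (-A) + Real.exp (-A) * x ^ 2 := by ring
    _ ≤ 1 + 243 / c ^ 2 := add_le_add e1 e2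

set_option maxHeartbeats 1600000 in
/-- Finiteness of `∫_δ^H ∫_{ℝ³} v_z⁻² exp(−2ρν(v)z/|v_z| − v_z²) dv dz` for a collision
frequency `ν` with `ν(v) ≥ ν_m(1 + |v|)`. Here points of `ℝ³` are `v = (v_x, v_y, v_z)`. -/
theorem damped_transport_kernel_integrable
    (ρ νm δ H : ℝ) (hρ : 0 < ρ) (hνm : 0 < νm) (hδ : 0 < δ) (hδH : δ < H)
    (ν : ℝ × ℝ × ℝ → ℝ) (hν : Measurable ν)
    (hlb : ∀ v : ℝ × ℝ × ℝ,
      νm * (1 + Real.sqrt (v.1 ^ 2 + v.2.1 ^ 2 + v.2.2 ^ 2)) ≤ ν v) :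
    IntegrableOn
      (fun p : ℝ × (ℝ × ℝ × ℝ) =>
        (p.2.2.2 ^ 2)⁻¹ *
          Real.exp (-(2 * ρ * ν p.2 * p.1) / |p.2.2.2| - p.2.2.2 ^ 2))
      (Ioo δ H ×ˢ univ) := by
  set C : ℝ := 2 * ρ * νm * δ with hCdef
  have hC : 0 < C := by positivity
  -- dominating function
  have h1 : Integrable (fun x : ℝ => (1 + x ^ 2)⁻¹) := integrable_inv_one_add_sq
  have h3 : Integrable (fun x : ℝ => Real.exp (-(1/3) * x ^ 2)) := by
    simpa [neg_mul] using integrable_exp_neg_mul_sq (show (0:ℝ) < 1/3 by norm_num)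
  have h23 : Integrable (fun q : ℝ × ℝ => (1 + q.1 ^ 2)⁻¹ * Real.exp (-(1/3) * q.2 ^ 2)) := by
    rw [Measure.volume_eq_prod]; exact h1.mul_prod h3
  have hF : Integrable (fun v : ℝ × ℝ × ℝ =>
      (1 + v.1 ^ 2)⁻¹ * ((1 + v.2.1 ^ 2)⁻¹ * Real.exp (-(1/3) * v.2.2 ^ 2))) := by
    rw [Measure.volume_eq_prod]; exact h1.mul_prod h23
  have hGint : IntegrableOn (fun p : ℝ × (ℝ × ℝ × ℝ) =>
      (36 / C ^ 2 * ((1 + 243 / C ^ 2) * (1 + 243 / C ^ 2))) *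
        ((1 + p.2.1 ^ 2)⁻¹ * ((1 + p.2.2.1 ^ 2)⁻¹ * Real.exp (-(1/3) * p.2.2.2 ^ 2))))
      (Ioo δ H ×ˢ univ) := by
    have hconst : Integrable (fun _ : ℝ => (36 / C ^ 2 * ((1 + 243 / C ^ 2) * (1 + 243 / C ^ 2))))
        (volume.restrict (Ioo δ H)) :=
      (integrableOn_const_iff (by finiteness)).2 (Or.inr measure_Ioo_lt_top)
    rw [IntegrableOn, Measure.volume_eq_prod, ← Measure.prod_restrict,
      Measure.restrict_univ]
    exact hconst.mul_prod hF
  apply Integrable.mono' hGint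
  · apply Measurable.aestronglyMeasurable
    apply Measurable.mul
    · fun_prop
    · apply Real.measurable_exp.comp
      apply Measurable.sub
      · apply Measurable.div
        · fun_prop
        · fun_prop
      · fun_prop
  · filter_upwards [ae_restrict_mem (measurableSet_Ioo.prod MeasurableSet.univ)] with p hp
    obtain ⟨hz1, hz2⟩ := hp.1
    rw [Real.norm_eq_abs, abs_of_nonneg (by positivity)]
    by_cases hw : p.2.2.2 = 0
    · rw [hw]
      norm_num
      positivity
    · have ht : 0 < |p.2.2.2| := abs_pos.mpr hw
      set w := p.2.2.2 with hwdef
      set vx := p.2.1 with hvxdef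
      set vy := p.2.2.1 with hvydef
      set t := |w| with htdef
      have hsq : w ^ 2 = t ^ 2 := (sq_abs w).symm
      -- lower bound on the exponent
      set N := Real.sqrt (vx ^ 2 + vy ^ 2 + w ^ 2) with hNdef
      have hN0 : 0 ≤ N := Real.sqrt_nonneg _
      have hNx : |vx| ≤ N := by
        rw [← Real.sqrt_sq_eq_abs]
        exact Real.sqrt_le_sqrt (by nlinarith [sq_nonneg vy, sq_nonneg w])
      have hNy : |vy| ≤ N := by
        rw [← Real.sqrt_sq_eq_abs]
        exact Real.sqrt_le_sqrt (by nlinarith [sq_nonneg vx, sq_nonneg w])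
      have hlbp := hlb p.2
      have hνpos : 0 < νm * (1 + N) := by positivity
      have hnum : C * (2 + |vx| + |vy|) / 3 ≤ 2 * ρ * ν p.2 * p.1 := by
        have key : 2 + |vx| + |vy| ≤ 3 * (1 + N) := by linarith
        have step1 : C * (2 + |vx| + |vy|) / 3 ≤ 2 * ρ * (νm * (1 + N)) * δ := by
          rw [hCdef]
          nlinarith [mul_le_mul_of_nonneg_left key
            (show (0:ℝ) ≤ 2 * ρ * νm * δ / 3 by positivity)]
        have step2 : 2 * ρ * (νm * (1 + N)) * δ ≤ 2 * ρ * ν p.2 * p.1 := by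
          have hν2 : νm * (1 + N) ≤ ν p.2 := hlbp
          have hzδ : δ ≤ p.1 := hz1.le
          have hb : (0:ℝ) ≤ 2 * ρ * ν p.2 := by
            have : 0 < ν p.2 := lt_of_lt_of_le hνpos hν2
            positivity
          exact mul_le_mul (mul_le_mul_of_nonneg_left hν2 (by positivity)) hzδ hδ.le hb
        linarith
      have hdiv : (C * (2 + |vx| + |vy|) / 3) / t ≤ (2 * ρ * ν p.2 * p.1) / t := by
        gcongr
      have hexpand : C / (3 * t) + t ^ 2 / 3 + (C * |vx| / (3 * t) + t ^ 2 / 3)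
          + (C * |vy| / (3 * t) + t ^ 2 / 3) + C / (3 * t)
          = (C * (2 + |vx| + |vy|) / 3) / t + t ^ 2 := by
        field_simp; ring
      have hEge : C / (3 * t) + t ^ 2 / 3 + (C * |vx| / (3 * t) + t ^ 2 / 3)
          + (C * |vy| / (3 * t) + t ^ 2 / 3) ≤ (2 * ρ * ν p.2 * p.1) / t + t ^ 2 := by
        have hpos : 0 ≤ C / (3 * t) := by positivity
        linarith
      have B0 := aux_inv hC ht
      have B1 : Real.exp (-(C * |vx| / (3 * t) + t ^ 2 / 3)) ≤
          (1 + 243 / C ^ 2) * (1 + vx ^ 2)⁻¹ := by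
        simpa [sq_abs] using aux_decay hC ht (abs_nonneg vx)
      have B2 : Real.exp (-(C * |vy| / (3 * t) + t ^ 2 / 3)) ≤
          (1 + 243 / C ^ 2) * (1 + vy ^ 2)⁻¹ := by
        simpa [sq_abs] using aux_decay hC ht (abs_nonneg vy)
      calc (w ^ 2)⁻¹ * Real.exp (-(2 * ρ * ν p.2 * p.1) / t - w ^ 2)
          ≤ (t ^ 2)⁻¹ * Real.exp (-(C / (3 * t) + t ^ 2 / 3 + (C * |vx| / (3 * t) + t ^ 2 / 3)
              + (C * |vy| / (3 * t) + t ^ 2 / 3))) := by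
            rw [hsq]
            apply mul_le_mul_of_nonneg_left _ (by positivity)
            apply Real.exp_le_exp.mpr
            rw [neg_div]
            linarith
        _ = ((t ^ 2)⁻¹ * Real.exp (-(C / (3 * t)))) * (Real.exp (-(t ^ 2 / 3)) *
              (Real.exp (-(C * |vx| / (3 * t) + t ^ 2 / 3)) *
                Real.exp (-(C * |vy| / (3 * t) + t ^ 2 / 3)))) := by
            rw [show -(C / (3 * t) + t ^ 2 / 3 + (C * |vx| / (3 * t) + t ^ 2 / 3)
                + (C * |vy| / (3 * t) + t ^ 2 / 3))
                = -(C / (3 * t)) + (-(t ^ 2 / 3) + (-(C * |vx| / (3 * t) + t ^ 2 / 3)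
                + -(C * |vy| / (3 * t) + t ^ 2 / 3))) from by ring,
              Real.exp_add, Real.exp_add, Real.exp_add]
            ring
        _ ≤ (36 / C ^ 2) * (Real.exp (-(t ^ 2 / 3)) *
              (((1 + 243 / C ^ 2) * (1 + vx ^ 2)⁻¹) *
                ((1 + 243 / C ^ 2) * (1 + vy ^ 2)⁻¹))) := by
            gcongr
        _ = (36 / C ^ 2 * ((1 + 243 / C ^ 2) * (1 + 243 / C ^ 2))) *
              ((1 + vx ^ 2)⁻¹ * ((1 + vy ^ 2)⁻¹ * Real.exp (-(1/3) * w ^ 2))) := by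
            rw [show Real.exp (-(t ^ 2 / 3)) = Real.exp (-(1/3) * w ^ 2) from by
              rw [hsq]; ring_nf]
            ring
end

section
/- Let M(v) = (2π)^{-3/2} exp(−|v|²/2) be the normalized Maxwellian on ℝ³, and let g : ℝ³ → ℝ be measurable with ∫_{ℝ³} |v_z| g(v)² M(v) dv < ∞. Suppose g satisfies the diffuse reflection condition g(v) = β for almost every v with v_z > 0, where β = √(2π) ∫_{w_z < 0} |w_z| g(w) M(w) dw. Then −∫_{ℝ³} v_z g(v)² M(v) dv = ∫_{v_z < 0} |v_z| (g(v) − β)² M(v) dv; in particular ∫_{ℝ³} v_z g(v)² M(v) dv ≤ 0. -/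
open Set MeasureTheory

/-- The normalized Maxwellian `M(v) = (2π)^{-3/2} exp(−|v|²/2)` on `ℝ³`. -/
noncomputable def Maxw (v : ℝ × ℝ × ℝ) : ℝ :=
  (2 * Real.pi) ^ (-(3:ℝ) / 2) * Real.exp (-(v.1 ^ 2 + v.2.1 ^ 2 + v.2.2 ^ 2) / 2)

open Real Filter

noncomputable def phi (z : ℝ) : ℝ := (2 * Real.pi) ^ (-(1:ℝ)/2) * Real.exp (-(z^2)/2)

lemma exp_form (z : ℝ) : Real.exp (-(z^2)/2) = Real.exp (-(1/2) * z^2) := by ring_nf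

lemma phi_int : Integrable phi := by
  have := (integrable_exp_neg_mul_sq (by norm_num : (0:ℝ) < 1/2)).const_mul
    ((2 * Real.pi) ^ (-(1:ℝ)/2))
  exact this.congr (by filter_upwards with z; rw [phi, exp_form])

lemma phi_integral : ∫ z, phi z = 1 := by
  have h : ∫ z, phi z = (2 * Real.pi) ^ (-(1:ℝ)/2) * ∫ z, Real.exp (-(1/2) * z^2) := by
    rw [← integral_const_mul]; congr 1; funext z; rw [phi, exp_form]
  rw [h, integral_gaussian]
  have : √(Real.pi / (1/2)) = √(2 * Real.pi) := by norm_num [mul_comm]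
  rw [this, Real.sqrt_eq_rpow, ← Real.rpow_add (by positivity)]
  norm_num

lemma absphi_int : Integrable (fun z => |z| * phi z) := by
  have h := ((integrable_mul_exp_neg_mul_sq (by norm_num : (0:ℝ) < 1/2)).abs).const_mul
    ((2 * Real.pi) ^ (-(1:ℝ)/2))
  refine h.congr ?_
  filter_upwards with z
  rw [phi, exp_form, abs_mul, abs_of_pos (Real.exp_pos _)]
  ring

lemma moment_pos' : ∫ z in Ioi (0:ℝ), z * Real.exp (-(z^2)/2) = 1 := by
  have hderiv : ∀ x ∈ Ici (0:ℝ), HasDerivAt (fun z => -Real.exp (-(z^2)/2))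
      (x * Real.exp (-(x^2)/2)) x := by
    intro x _
    have h1 : HasDerivAt (fun z : ℝ => -(z^2)/2) (-x) x := by
      have := (hasDerivAt_pow 2 x).neg.div_const 2
      exact this.congr_deriv (by norm_num; ring)
    have := (h1.exp).neg
    exact this.congr_deriv (by ring)
  have hint : IntegrableOn (fun z => z * Real.exp (-(z^2)/2)) (Ioi 0) := by
    have := integrable_mul_exp_neg_mul_sq (by norm_num : (0:ℝ) < 1/2)
    exact (this.congr (by filter_upwards with z; rw [exp_form])).integrableOn
  have htend : Tendsto (fun z => -Real.exp (-(z^2)/2)) atTop (nhds 0) := by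
    rw [show (0:ℝ) = -0 by norm_num]
    refine Filter.Tendsto.neg ?_
    refine Real.tendsto_exp_atBot.comp ?_
    have h2 : Tendsto (fun z : ℝ => z^2 * (-(1:ℝ)/2)) atTop atBot :=
      (tendsto_pow_atTop (by norm_num)).atTop_mul_const_of_neg (by norm_num)
    exact h2.congr (by intro z; ring)
  have := integral_Ioi_of_hasDerivAt_of_tendsto' hderiv hint htend
  simpa using this

lemma moment_pos : ∫ z in Ioi (0:ℝ), z * phi z = (2 * Real.pi) ^ (-(1:ℝ)/2) := by
  have : ∫ z in Ioi (0:ℝ), z * phi z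
      = (2 * Real.pi) ^ (-(1:ℝ)/2) * ∫ z in Ioi (0:ℝ), z * Real.exp (-(z^2)/2) := by
    rw [← integral_const_mul]; congr 1; funext z; rw [phi]; ring
  rw [this, moment_pos', mul_one]

lemma moment_neg : ∫ z in Iio (0:ℝ), |z| * phi z = (2 * Real.pi) ^ (-(1:ℝ)/2) := by
  have h0 : (∫ z in Ioi (0:ℝ), |(-z)| * phi (-z)) = ∫ z in Iic (-(0:ℝ)), |z| * phi z :=
    integral_comp_neg_Ioi 0 (fun z => |z| * phi z)
  have h1 : (∫ z in Ioi (0:ℝ), |(-z)| * phi (-z)) = ∫ z in Ioi (0:ℝ), z * phi z := by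
    refine setIntegral_congr_fun measurableSet_Ioi (fun z hz => ?_)
    simp only [phi, abs_neg, neg_sq, abs_of_pos (mem_Ioi.mp hz)]
  rw [← integral_Iic_eq_integral_Iio, ← neg_zero, ← h0, h1, moment_pos]

lemma maxw_eq (v : ℝ × ℝ × ℝ) : Maxw v = phi v.1 * (phi v.2.1 * phi v.2.2) := by
  rw [Maxw, phi, phi, phi,
    show (-(3:ℝ)/2) = (-(1:ℝ)/2) + ((-(1:ℝ)/2) + (-(1:ℝ)/2)) by norm_num,
    Real.rpow_add (by positivity), Real.rpow_add (by positivity),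
    show (-(v.1 ^ 2 + v.2.1 ^ 2 + v.2.2 ^ 2) / 2)
      = (-(v.1^2)/2) + ((-(v.2.1^2)/2) + (-(v.2.2^2)/2)) by ring,
    Real.exp_add, Real.exp_add]
  ring

lemma maxw_pos (v : ℝ × ℝ × ℝ) : 0 < Maxw v := by
  rw [Maxw]; positivity

lemma maxw_meas : Measurable Maxw := by
  apply Measurable.const_mul
  apply Real.measurable_exp.comp
  fun_prop

lemma fub (h : ℝ → ℝ) : (∫ v : ℝ × ℝ × ℝ, h v.2.2 * Maxw v) = ∫ z, h z * phi z := by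
  have he : (fun v : ℝ × ℝ × ℝ => h v.2.2 * Maxw v)
      = fun v : ℝ × ℝ × ℝ => phi v.1 * ((fun q : ℝ × ℝ => phi q.1 * (h q.2 * phi q.2)) v.2) := by
    funext v; rw [maxw_eq]; ring
  rw [he]
  have h1 : (∫ v : ℝ × ℝ × ℝ, phi v.1 * ((fun q : ℝ × ℝ => phi q.1 * (h q.2 * phi q.2)) v.2))
      = (∫ z, phi z) * ∫ q : ℝ × ℝ, phi q.1 * (h q.2 * phi q.2) :=
    integral_prod_mul phi (fun q : ℝ × ℝ => phi q.1 * (h q.2 * phi q.2))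
  have h2 : (∫ q : ℝ × ℝ, phi q.1 * (h q.2 * phi q.2))
      = (∫ z, phi z) * ∫ z, h z * phi z :=
    integral_prod_mul phi (fun z => h z * phi z)
  rw [h1, h2, phi_integral]; ring

lemma absM_int : Integrable (fun v : ℝ × ℝ × ℝ => |v.2.2| * Maxw v) := by
  have he : (fun v : ℝ × ℝ × ℝ => |v.2.2| * Maxw v)
      = fun v : ℝ × ℝ × ℝ => phi v.1 * ((fun q : ℝ × ℝ => phi q.1 * (|q.2| * phi q.2)) v.2) := by
    funext v; rw [maxw_eq]; ring
  rw [he]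
  exact phi_int.mul_prod (phi_int.mul_prod absphi_int)

lemma zero_null : volume {v : ℝ × ℝ × ℝ | v.2.2 = 0} = 0 := by
  have : {v : ℝ × ℝ × ℝ | v.2.2 = 0} = (univ : Set ℝ) ×ˢ ((univ : Set ℝ) ×ˢ ({0} : Set ℝ)) := by
    ext ⟨x, y, z⟩; simp [eq_comm]
  rw [this, MeasureTheory.Measure.volume_eq_prod, Measure.prod_prod,
    MeasureTheory.Measure.volume_eq_prod, Measure.prod_prod]
  simp

lemma moment3_pos : (∫ v in {v : ℝ × ℝ × ℝ | 0 < v.2.2}, v.2.2 * Maxw v)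
    = (2 * Real.pi) ^ (-(1:ℝ)/2) := by
  have hs : MeasurableSet {v : ℝ × ℝ × ℝ | 0 < v.2.2} :=
    measurableSet_lt measurable_const (measurable_snd.snd)
  rw [← integral_indicator hs]
  have he : ({v : ℝ × ℝ × ℝ | 0 < v.2.2}).indicator (fun v => v.2.2 * Maxw v)
      = fun v : ℝ × ℝ × ℝ => (Set.indicator (Ioi 0) id v.2.2) * Maxw v := by
    funext v
    by_cases h : 0 < v.2.2 <;> simp [Set.indicator, h, mem_Ioi]
  rw [he, fub]
  have he2 : (fun z : ℝ => Set.indicator (Ioi 0) id z * phi z)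
      = (Ioi (0:ℝ)).indicator (fun z => z * phi z) := by
    funext z; by_cases h : z ∈ Ioi (0:ℝ) <;> simp [Set.indicator, h]
  rw [he2, integral_indicator measurableSet_Ioi, moment_pos]

lemma moment3_neg : (∫ v in {v : ℝ × ℝ × ℝ | v.2.2 < 0}, |v.2.2| * Maxw v)
    = (2 * Real.pi) ^ (-(1:ℝ)/2) := by
  have hs : MeasurableSet {v : ℝ × ℝ × ℝ | v.2.2 < 0} :=
    measurableSet_lt (measurable_snd.snd) measurable_const
  rw [← integral_indicator hs]
  have he : ({v : ℝ × ℝ × ℝ | v.2.2 < 0}).indicator (fun v => |v.2.2| * Maxw v)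
      = fun v : ℝ × ℝ × ℝ => (Set.indicator (Iio 0) abs v.2.2) * Maxw v := by
    funext v
    by_cases h : v.2.2 < 0 <;> simp [Set.indicator, h, mem_Iio]
  rw [he, fub]
  have he2 : (fun z : ℝ => Set.indicator (Iio 0) abs z * phi z)
      = (Iio (0:ℝ)).indicator (fun z => |z| * phi z) := by
    funext z; by_cases h : z ∈ Iio (0:ℝ) <;> simp [Set.indicator, h]
  rw [he2, integral_indicator measurableSet_Iio, moment_neg]

lemma sqrt_c : Real.sqrt (2 * Real.pi) * (2 * Real.pi) ^ (-(1:ℝ)/2) = 1 := by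
  rw [Real.sqrt_eq_rpow, ← Real.rpow_add (by positivity)]
  norm_num

/-- Darrozès–Guiraud type identity for diffuse reflection at the boundary `z = 0`:
if `g = β` for a.e. incoming velocity (`v_z > 0`), where
`β = √(2π) ∫_{w_z<0} |w_z| g(w) M(w) dw`, then
`−∫ v_z g² M dv = ∫_{v_z<0} |v_z| (g − β)² M dv ≥ 0`. -/
theorem diffuse_reflection_energy_identity
    (g : ℝ × ℝ × ℝ → ℝ) (hg : Measurable g)
    (hint : Integrable (fun v : ℝ × ℝ × ℝ => |v.2.2| * (g v) ^ 2 * Maxw v))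
    (β : ℝ)
    (hβ : β = Real.sqrt (2 * Real.pi) *
      ∫ w in {w : ℝ × ℝ × ℝ | w.2.2 < 0}, |w.2.2| * g w * Maxw w)
    (hrefl : ∀ᵐ v : ℝ × ℝ × ℝ, 0 < v.2.2 → g v = β) :
    (-(∫ v : ℝ × ℝ × ℝ, v.2.2 * (g v) ^ 2 * Maxw v) =
      ∫ v in {v : ℝ × ℝ × ℝ | v.2.2 < 0}, |v.2.2| * (g v - β) ^ 2 * Maxw v) ∧
    (∫ v : ℝ × ℝ × ℝ, v.2.2 * (g v) ^ 2 * Maxw v) ≤ 0 := by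
  set c : ℝ := (2 * Real.pi) ^ (-(1:ℝ)/2) with hc
  set s : Set (ℝ × ℝ × ℝ) := {v | v.2.2 < 0} with hs_def
  set t : Set (ℝ × ℝ × ℝ) := {v | 0 < v.2.2} with ht_def
  have hs : MeasurableSet s := measurableSet_lt (measurable_snd.snd) measurable_const
  have ht : MeasurableSet t := measurableSet_lt measurable_const (measurable_snd.snd)
  -- integrability of the main integrand
  have hA : Integrable (fun v : ℝ × ℝ × ℝ => v.2.2 * (g v) ^ 2 * Maxw v) := by
    refine hint.mono' ?_ ?_
    · exact (((measurable_snd.snd).mul (hg.pow_const 2)).mul maxw_meas).aestronglyMeasurable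
    · filter_upwards with v
      rw [Real.norm_eq_abs, abs_mul, abs_mul, abs_of_nonneg (sq_nonneg (g v)),
        abs_of_pos (maxw_pos v)]
  -- integrability of |v_z| g M
  have hGM : Integrable (fun v : ℝ × ℝ × ℝ => |v.2.2| * g v * Maxw v) := by
    refine ((absM_int.add hint).div_const 2).mono' ?_ ?_
    · exact (((measurable_snd.snd.abs).mul hg).mul maxw_meas).aestronglyMeasurable
    · filter_upwards with v
      rw [Real.norm_eq_abs, abs_mul, abs_mul, abs_abs, abs_of_pos (maxw_pos v)]
      have h1 : 0 ≤ |v.2.2| := abs_nonneg _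
      have h2 : (0:ℝ) < Maxw v := maxw_pos v
      have h3 : (0:ℝ) ≤ (|g v| - 1)^2 := sq_nonneg _
      have h4 : |g v|^2 = g v ^ 2 := sq_abs (g v)
      have h5 : |v.2.2| * Maxw v * (|g v| - 1)^2
          = |v.2.2| * Maxw v + |v.2.2| * g v ^ 2 * Maxw v
            - 2 * (|v.2.2| * |g v| * Maxw v) := by rw [← h4]; ring
      simp only [Pi.add_apply]
      linarith [mul_nonneg (mul_nonneg h1 h2.le) h3, h5]
  -- splitting the full integral
  have hsplit : (∫ v in s, v.2.2 * (g v) ^ 2 * Maxw v)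
      + (∫ v in sᶜ, v.2.2 * (g v) ^ 2 * Maxw v)
      = ∫ v : ℝ × ℝ × ℝ, v.2.2 * (g v) ^ 2 * Maxw v := integral_add_compl hs hA
  have hse : sᶜ =ᵐ[volume] t := by
    apply ae_eq_set.mpr
    constructor
    · refine measure_mono_null ?_ zero_null
      intro v hv
      have h1 : ¬ (v.2.2 < 0) := hv.1
      have h2 : ¬ (0 < v.2.2) := hv.2
      show v.2.2 = 0
      exact le_antisymm (not_lt.mp h2) (not_lt.mp h1)
    · refine measure_mono_null ?_ zero_null
      intro v hv
      have h1 : 0 < v.2.2 := hv.1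
      have h2 : v ∈ s := not_not.mp hv.2
      exact (lt_asymm h1 h2).elim
  have hcompl : (∫ v in sᶜ, v.2.2 * (g v) ^ 2 * Maxw v)
      = ∫ v in t, v.2.2 * (g v) ^ 2 * Maxw v := setIntegral_congr_set hse
  -- on t, g = β a.e.
  have hTval : (∫ v in t, v.2.2 * (g v) ^ 2 * Maxw v) = β ^ 2 * c := by
    have h1 : (∫ v in t, v.2.2 * (g v) ^ 2 * Maxw v)
        = ∫ v in t, β ^ 2 * (v.2.2 * Maxw v) := by
      refine setIntegral_congr_ae ht ?_
      filter_upwards [hrefl] with v hv hvt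
      rw [hv hvt]; ring
    rw [h1, integral_const_mul, moment3_pos]
  -- on s
  have hSval : (∫ v in s, v.2.2 * (g v) ^ 2 * Maxw v)
      = -∫ v in s, |v.2.2| * (g v) ^ 2 * Maxw v := by
    rw [← integral_neg]
    refine setIntegral_congr_fun hs fun v hv => ?_
    have : |v.2.2| = -v.2.2 := abs_of_neg hv
    rw [this]; ring
  -- RHS expansion
  have hRHS : (∫ v in s, |v.2.2| * (g v - β) ^ 2 * Maxw v)
      = (∫ v in s, |v.2.2| * (g v) ^ 2 * Maxw v)
        - 2 * β * (∫ v in s, |v.2.2| * g v * Maxw v) + β ^ 2 * c := by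
    have he : (fun v : ℝ × ℝ × ℝ => |v.2.2| * (g v - β) ^ 2 * Maxw v)
        = fun v : ℝ × ℝ × ℝ => (|v.2.2| * (g v) ^ 2 * Maxw v
            - 2 * β * (|v.2.2| * g v * Maxw v)) + β ^ 2 * (|v.2.2| * Maxw v) := by
      funext v; ring
    rw [he, integral_add
        (f := fun v : ℝ × ℝ × ℝ => |v.2.2| * g v ^ 2 * Maxw v - 2 * β * (|v.2.2| * g v * Maxw v))
        (g := fun v : ℝ × ℝ × ℝ => β ^ 2 * (|v.2.2| * Maxw v))
        (by exact hint.integrableOn.sub ((hGM.integrableOn).const_mul (2*β)))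
        (by exact (absM_int.integrableOn).const_mul (β^2)),
      integral_sub
        (f := fun v : ℝ × ℝ × ℝ => |v.2.2| * g v ^ 2 * Maxw v)
        (g := fun v : ℝ × ℝ × ℝ => 2 * β * (|v.2.2| * g v * Maxw v))
        hint.integrableOn ((hGM.integrableOn).const_mul (2*β)),
      integral_const_mul, integral_const_mul, moment3_neg]
  have hJ : β * c = ∫ v in s, |v.2.2| * g v * Maxw v := by
    calc β * c = (∫ v in s, |v.2.2| * g v * Maxw v) * (Real.sqrt (2 * Real.pi) * c) := by
          rw [hβ]; ring
    _ = ∫ v in s, |v.2.2| * g v * Maxw v := by rw [hc, sqrt_c, mul_one]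
  have h2J : 2 * β * (∫ v in s, |v.2.2| * g v * Maxw v) = 2 * β ^ 2 * c := by
    rw [← hJ]; ring
  have key : -(∫ v : ℝ × ℝ × ℝ, v.2.2 * (g v) ^ 2 * Maxw v)
      = ∫ v in s, |v.2.2| * (g v - β) ^ 2 * Maxw v := by
    rw [hRHS]
    linarith [hsplit, hcompl, hTval, hSval, h2J]
  have hnonneg : 0 ≤ ∫ v in s, |v.2.2| * (g v - β) ^ 2 * Maxw v := by
    refine setIntegral_nonneg hs fun v _ => ?_
    have := maxw_pos v
    positivity
  exact ⟨key, by linarith [key, hnonneg]⟩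
end
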